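/- Let G₁ = ℍ⁺ \ (0, (8c−1)i] for a constant c ≥ 1, where ℍ⁺ is the upper half-plane in ℂ and (0, (8c−1)i] denotes the vertical segment {ti : 0 < t ≤ 8c−1}. Then G₁ is a 4-John domain: there exists a center point such that every z ∈ G₁ can be joined to it by a rectifiable arc γ ⊂ G₁ with ℓ(γ[z, w]) ≤ 4·d_{G₁}(w) for all w ∈ γ (with the center taken to be ∞, i.e., carrot arcs going to infinity). -/

import Mathlib

open Metric Set

/-- The domain `G₁ = ℍ⁺ \ (0, (8c-1)i]`: the upper half-plane with the vertical
segment `{ti : 0 < t ≤ 8 * c - 1}` removed. -/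
def JohnG1 (c : ℝ) : Set ℂ :=
  {z | 0 < z.im} \ {z | z.re = 0 ∧ 0 < z.im ∧ z.im ≤ 8 * c - 1}

lemma john_le_infDist {x : ℂ} {A : Set ℂ} (hA : A.Nonempty) {r : ℝ}
    (h : ∀ y ∈ A, r ≤ dist x y) : r ≤ infDist x A := by
  have h1 : ENNReal.ofReal r ≤ Metric.infEDist x A := by
    rw [EMetric.le_infEdist]
    intro y hy
    rw [edist_dist]
    exact ENNReal.ofReal_le_ofReal (h y hy)
  rw [Metric.infDist]
  exact (ENNReal.ofReal_le_iff_le_toReal (Metric.infEdist_ne_top hA)).1 h1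

/-- `G₁ = ℍ⁺ \ (0,(8c-1)i]` is a `4`-John domain with center `∞`: every point can be
joined to `∞` by a `4`-carrot arc in `G₁`. -/
theorem stmt10 (c : ℝ) (hc : 1 ≤ c) :
    ∀ z ∈ JohnG1 c, ∃ γ : ℝ → ℂ,
      γ 0 = z ∧ ContinuousOn γ (Ici 0) ∧
      (∀ t ∈ Ici (0:ℝ), γ t ∈ JohnG1 c) ∧
      Filter.Tendsto (fun t => ‖γ t‖) Filter.atTop Filter.atTop ∧
      ∀ t ∈ Ici (0:ℝ),
        eVariationOn γ (Icc 0 t) ≤ ENNReal.ofReal (4 * infDist (γ t) (JohnG1 c)ᶜ) := by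
  intro z hz
  obtain ⟨hzim, hzseg⟩ := hz
  simp only [mem_setOf_eq] at hzim
  set s : ℝ := if 0 ≤ z.re then 1 else -1 with hs
  have hs1 : |s| = 1 := by
    rw [hs]; split_ifs <;> simp
  clear_value s
  refine ⟨fun t => z + (↑(t * s / 2) + ↑(t / 2) * Complex.I), by simp, ?_, ?_, ?_, ?_⟩
  · refine Continuous.continuousOn ?_
    exact continuous_const.add (((Complex.continuous_ofReal.comp (by fun_prop)).add
      ((Complex.continuous_ofReal.comp (by fun_prop)).mul continuous_const)))
  case _ => -- membership
    intro t ht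
    simp only [mem_Ici] at ht
    have hre : (z + (↑(t * s / 2) + ↑(t / 2) * Complex.I)).re = z.re + t * s / 2 := by simp
    have him : (z + (↑(t * s / 2) + ↑(t / 2) * Complex.I)).im = z.im + t / 2 := by simp
    constructor
    · simp only [mem_setOf_eq, him]; linarith
    · intro ⟨h0, _, _⟩
      rw [hre] at h0
      rcases eq_or_lt_of_le ht with h | h
      · apply hzseg
        have hz0 : z.re = 0 := by rw [← h] at h0; simpa using h0
        refine ⟨hz0, hzim, ?_⟩
        have : z.im = z.im + t / 2 := by rw [← h]; ring
        -- need z.im ≤ 8c-1 : follows from membership of the point in the bad set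
        have h2 := ‹(z + (↑(t * s / 2) + ↑(t / 2) * Complex.I)).im ≤ 8 * c - 1›
        rw [him, ← h] at h2
        linarith
      · rw [hs] at h0
        split_ifs at h0 with hzr
        · nlinarith
        · push_neg at hzr; nlinarith
  · -- tendsto atTop
    have hb : ∀ t : ℝ, z.im + t / 2 ≤ ‖z + (↑(t * s / 2) + ↑(t / 2) * Complex.I)‖ := by
      intro t
      have him : (z + (↑(t * s / 2) + ↑(t / 2) * Complex.I)).im = z.im + t / 2 := by simp
      calc z.im + t / 2 ≤ |(z + (↑(t * s / 2) + ↑(t / 2) * Complex.I)).im| := by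
            rw [him]; exact le_abs_self _
        _ ≤ ‖z + (↑(t * s / 2) + ↑(t / 2) * Complex.I)‖ := Complex.abs_im_le_norm _
    apply Filter.tendsto_atTop_mono hb
    have : Filter.Tendsto (fun t : ℝ => t / 2) Filter.atTop Filter.atTop :=
      Filter.Tendsto.atTop_div_const (by norm_num) Filter.tendsto_id
    exact Filter.tendsto_atTop_add_const_left _ _ this
  · -- variation bound
    intro t ht
    simp only [mem_Ici] at ht
    set γ : ℝ → ℂ := fun t => z + (↑(t * s / 2) + ↑(t / 2) * Complex.I) with hγ
    -- γ is 1-Lipschitz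
    have hlip : LipschitzWith 1 γ := by
      apply LipschitzWith.of_dist_le_mul
      intro a b
      have : γ a - γ b = ↑((a - b) * s / 2) + ↑((a - b) / 2) * Complex.I := by
        rw [hγ]; push_cast; ring
      rw [dist_eq_norm, this, NNReal.coe_one, one_mul, Real.dist_eq]
      calc ‖(↑((a - b) * s / 2) + ↑((a - b) / 2) * Complex.I : ℂ)‖
          ≤ |((a - b) * s / 2)| + |((a - b) / 2)| := by
            have := Complex.norm_le_abs_re_add_abs_im
              (↑((a - b) * s / 2) + ↑((a - b) / 2) * Complex.I : ℂ)
            simpa using this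
        _ = |a - b| * |s| / 2 + |a - b| / 2 := by rw [abs_div, abs_div, abs_mul]; norm_num
        _ = |a - b| := by rw [hs1]; ring
    -- variation ≤ ofReal t
    have hvar : eVariationOn γ (Icc 0 t) ≤ ENNReal.ofReal t := by
      have h1 := (hlip.lipschitzOnWith (s := (Set.univ : Set ℝ))).comp_eVariationOn_le
        (g := (id : ℝ → ℝ)) (s := Icc 0 t) (mapsTo_univ _ _)
      rw [Function.comp_id] at h1
      have hmono : MonotoneOn (id : ℝ → ℝ) (Icc 0 t) := fun a _ b _ h => h
      have h2 := hmono.eVariationOn_le (a := 0) (b := t)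
        (Set.left_mem_Icc.2 ht) (Set.right_mem_Icc.2 ht)
      rw [Set.inter_self] at h2
      simp only [id_eq, sub_zero] at h2
      calc eVariationOn γ (Icc 0 t) ≤ (1 : NNReal) * eVariationOn id (Icc 0 t) := h1
        _ ≤ (1 : NNReal) * ENNReal.ofReal t := mul_le_mul_right h2 _
        _ = ENNReal.ofReal t := by rw [ENNReal.coe_one, one_mul]
    -- distance lower bound : infDist (γ t) (JohnG1 c)ᶜ ≥ t / 2
    have hdist : t / 2 ≤ infDist (γ t) (JohnG1 c)ᶜ := by
      apply john_le_infDist ⟨0, by simp [JohnG1]⟩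
      intro p hp
      have hre : (γ t).re = z.re + t * s / 2 := by simp [hγ]
      have him : (γ t).im = z.im + t / 2 := by simp [hγ]
      by_cases hpim : 0 < p.im
      · -- then p is in the removed segment, so p.re = 0
        have hpre : p.re = 0 := by
          by_contra h0
          exact hp ⟨hpim, fun hbad => h0 hbad.1⟩
        calc t / 2 ≤ |(γ t).re - p.re| := by
              rw [hpre, sub_zero, hre, hs]
              split_ifs with hzr
              · rw [abs_of_nonneg (by linarith)]; linarith
              · push_neg at hzr
                rw [abs_of_nonpos (by nlinarith)]; nlinarith
          _ = |(γ t - p).re| := by rw [Complex.sub_re]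
          _ ≤ ‖γ t - p‖ := Complex.abs_re_le_norm _
          _ = dist (γ t) p := (dist_eq_norm _ _).symm
      · push_neg at hpim
        calc t / 2 ≤ (γ t).im - p.im := by rw [him]; linarith
          _ ≤ |(γ t - p).im| := by rw [Complex.sub_im]; exact le_abs_self _
          _ ≤ ‖γ t - p‖ := Complex.abs_im_le_norm _
          _ = dist (γ t) p := (dist_eq_norm _ _).symm
    refine hvar.trans (ENNReal.ofReal_le_ofReal ?_)
    linarith
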